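/- Let G be a 2-coloring of the edges of the complete graph on n ≥ 6 vertices, and define A(G) as the average size of a monochromatic clique of G (averaged over all monochromatic cliques, of all sizes, including those of size 0 and 1) and M(G) as the maximum size of a monochromatic clique. Then M(G) − A(G) ≥ 1/2. -/

import Mathlib

theorem stmt_15 (n : ℕ) (hn : 6 ≤ n)
    (c : Fin n → Fin n → Bool) (hsym : ∀ i j, c i j = c j i)
    (M : ℕ)
    (hMmax : ∃ (S : Finset (Fin n)) (b : Bool),
      S.card = M ∧ ∀ i ∈ S, ∀ j ∈ S, i ≠ j → c i j = b)
    (hMub : ∀ (S : Finset (Fin n)) (b : Bool),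
      (∀ i ∈ S, ∀ j ∈ S, i ≠ j → c i j = b) → S.card ≤ M) :
    (M : ℝ) -
      (∑ P ∈ Finset.univ.filter (fun P : Finset (Fin n) × Bool =>
          ∀ i ∈ P.1, ∀ j ∈ P.1, i ≠ j → c i j = P.2), (P.1.card : ℝ)) /
      ((Finset.univ.filter (fun P : Finset (Fin n) × Bool =>
          ∀ i ∈ P.1, ∀ j ∈ P.1, i ≠ j → c i j = P.2)).card : ℝ)
      ≥ 1 / 2 := by
  classical
  set F := Finset.univ.filter (fun P : Finset (Fin n) × Bool =>
      ∀ i ∈ P.1, ∀ j ∈ P.1, i ≠ j → c i j = P.2) with hFdef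
  have hmemF : ∀ P : Finset (Fin n) × Bool,
      P ∈ F ↔ ∀ i ∈ P.1, ∀ j ∈ P.1, i ≠ j → c i j = P.2 := by
    intro P; simp [hFdef]
  -- M ≥ 2
  have hi0 : (0 : ℕ) < n := by omega
  have hi1 : (1 : ℕ) < n := by omega
  have hM2 : 2 ≤ M := by
    have h := hMub {⟨0, hi0⟩, ⟨1, hi1⟩} (c ⟨0, hi0⟩ ⟨1, hi1⟩) ?_
    · have hne : (⟨0, hi0⟩ : Fin n) ≠ ⟨1, hi1⟩ := by simp [Fin.ext_iff]
      rwa [Finset.card_insert_of_notMem (by simp [hne]), Finset.card_singleton] at h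
    · intro i hi j hj hij
      simp only [Finset.mem_insert, Finset.mem_singleton] at hi hj
      rcases hi with rfl | rfl <;> rcases hj with rfl | rfl <;>
        first | (exact absurd rfl hij) | rfl | (exact hsym _ _)
  set A := F.filter (fun P => P.1.card = M) with hAdef
  set B := F.filter (fun P => P.1.card = M - 1) with hBdef
  -- double counting: card A ≤ card B
  have hAB : A.card ≤ B.card := by
    have key : A.card * M ≤ B.card * M := by
      apply Finset.card_mul_le_card_mul
        (fun a b : Finset (Fin n) × Bool => b.1 ⊆ a.1 ∧ b.2 = a.2)
      · -- each M-clique has ≥ M subcliques of size M-1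
        rintro ⟨S, col⟩ ha
        simp only [hAdef, Finset.mem_filter] at ha
        obtain ⟨hSF, hScard⟩ := ha
        rw [hmemF] at hSF
        calc M = S.card := hScard.symm
          _ ≤ _ := ?_
        apply Finset.card_le_card_of_injOn (fun v => (S.erase v, col))
        · intro v hv
          simp only [Finset.mem_coe, Finset.mem_bipartiteAbove]
          refine ⟨?_, Finset.erase_subset _ _, trivial⟩
          simp only [hBdef, Finset.mem_filter]
          refine ⟨?_, ?_⟩
          · rw [hmemF]
            intro i hi j hj hij
            exact hSF i (Finset.mem_of_mem_erase hi) j (Finset.mem_of_mem_erase hj) hij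
          · simp [Finset.card_erase_of_mem hv, hScard]
        · intro v hv w hw hvw
          simp only [Prod.mk.injEq] at hvw
          by_contra hne
          have : v ∈ S.erase w := Finset.mem_erase.2 ⟨hne, hv⟩
          rw [← hvw.1] at this
          exact (Finset.notMem_erase v S) this
      · -- each (M-1)-clique extends to ≤ M cliques of size M
        rintro ⟨T, col⟩ hb
        simp only [hBdef, Finset.mem_filter] at hb
        obtain ⟨hTF, hTcard⟩ := hb
        rw [hmemF] at hTF
        set D := (A.bipartiteBelow
          (fun a b : Finset (Fin n) × Bool => b.1 ⊆ a.1 ∧ b.2 = a.2) (T, col)) with hDdef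
        have hDmem : ∀ a ∈ D, T ⊆ a.1 ∧ col = a.2 ∧ a.1.card = M ∧
            (∀ i ∈ a.1, ∀ j ∈ a.1, i ≠ j → c i j = a.2) := by
          intro a ha
          simp only [hDdef, Finset.mem_bipartiteBelow, hAdef, Finset.mem_filter] at ha
          obtain ⟨⟨haF, hacard⟩, hsub, hcol⟩ := ha
          rw [hmemF] at haF
          exact ⟨hsub, hcol, hacard, haF⟩
        set g : Finset (Fin n) × Bool → Fin n := fun a =>
          if h : (a.1 \ T).Nonempty then (a.1 \ T).min' h else ⟨0, hi0⟩ with hgdef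
        have hkey : ∀ a ∈ D, g a ∉ T ∧ a.1 = insert (g a) T := by
          intro a ha
          obtain ⟨hsub, _, hacard, hmono⟩ := hDmem a ha
          have hsd : (a.1 \ T).card = 1 := by
            rw [Finset.card_sdiff_of_subset hsub, hacard, hTcard]; omega
          have hne : (a.1 \ T).Nonempty := by
            rw [← Finset.card_pos, hsd]; omega
          have hg : g a ∈ a.1 \ T := by
            rw [hgdef]; simp only [dif_pos hne]; exact Finset.min'_mem _ hne
          obtain ⟨x, hx⟩ := Finset.card_eq_one.1 hsd
          have hgx : g a = x := by rw [hx] at hg; exact Finset.mem_singleton.1 hg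
          constructor
          · rw [hx] at hg
            have : x ∈ a.1 \ T := by rw [hx]; exact Finset.mem_singleton_self x
            exact hgx ▸ (Finset.mem_sdiff.1 this).2
          · apply Finset.Subset.antisymm
            · intro y hy
              by_cases hyT : y ∈ T
              · exact Finset.mem_insert_of_mem hyT
              · have hmem : y ∈ a.1 \ T := Finset.mem_sdiff.2 ⟨hy, hyT⟩
                rw [hx, Finset.mem_singleton] at hmem
                exact Finset.mem_insert.2 (Or.inl (hmem.trans hgx.symm))
            · intro y hy
              rcases Finset.mem_insert.1 hy with rfl | hyT
              · rw [hgx]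
                have : x ∈ a.1 \ T := by rw [hx]; exact Finset.mem_singleton_self x
                exact (Finset.mem_sdiff.1 this).1
              · exact hsub hyT
        -- g is injective on D
        have hinj : Set.InjOn g D := by
          intro a ha a' ha' hgg
          obtain ⟨_, h1⟩ := hkey a ha
          obtain ⟨_, h1'⟩ := hkey a' ha'
          obtain ⟨_, hc, _, _⟩ := hDmem a ha
          obtain ⟨_, hc', _, _⟩ := hDmem a' ha'
          have heq : a.1 = a'.1 := by rw [h1, h1', hgg]
          exact Prod.ext heq (hc ▸ hc')
        -- the image is a monochromatic clique in color !col
        have himg : (D.image g).card ≤ M := by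
          apply hMub _ (!col)
          intro y hy z hz hyz
          obtain ⟨a, ha, rfl⟩ := Finset.mem_image.1 hy
          obtain ⟨a', ha', rfl⟩ := Finset.mem_image.1 hz
          obtain ⟨hgaT, hSa⟩ := hkey a ha
          obtain ⟨hga'T, hSa'⟩ := hkey a' ha'
          obtain ⟨_, hca, hcarda, hmonoa⟩ := hDmem a ha
          obtain ⟨_, hca', hcarda', hmonoa'⟩ := hDmem a' ha'
          -- suppose c (g a) (g a') = col : build clique of size M+1
          by_contra hcc
          have hcol : c (g a) (g a') = col := by
            cases hval : c (g a) (g a') with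
            | false => cases col with
              | false => rfl
              | true => exact absurd hval (by simpa [hval] using hcc)
            | true => cases col with
              | false => exact absurd hval (by simpa [hval] using hcc)
              | true => rfl
          have hbig : (insert (g a') a.1).card ≤ M := by
            apply hMub _ col
            intro i hi j hj hij
            have hgi : c i (g a') = col → c (g a') i = col := fun h => (hsym _ _).symm ▸ hsym _ _ ▸ h
            rcases Finset.mem_insert.1 hi with rfl | hiS <;>
              rcases Finset.mem_insert.1 hj with rfl | hjS
            · exact absurd rfl hij
            · -- i = g a', j ∈ a.1 = insert (g a) T
              rcases Finset.mem_insert.1 (hSa ▸ hjS) with rfl | hjT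
              · rw [hsym]; exact hcol
              · have hjmem : j ∈ a'.1 := hSa' ▸ Finset.mem_insert_of_mem hjT
                have h := hmonoa' _ (hSa' ▸ Finset.mem_insert_self _ _) _ hjmem hij
                rw [h, ← hca']
            · rcases Finset.mem_insert.1 (hSa ▸ hiS) with rfl | hiT
              · exact hcol
              · have himem : i ∈ a'.1 := hSa' ▸ Finset.mem_insert_of_mem hiT
                have h := hmonoa' _ himem _ (hSa' ▸ Finset.mem_insert_self _ _) hij
                rw [h, ← hca']
            · have h := hmonoa _ hiS _ hjS hij
              rw [h, ← hca]
          have hnotmem : g a' ∉ a.1 := by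
            rw [hSa]
            intro hmem
            rcases Finset.mem_insert.1 hmem with h | h
            · exact hyz h.symm
            · exact hga'T h
          rw [Finset.card_insert_of_notMem hnotmem, hcarda] at hbig
          omega
        calc D.card = (D.image g).card := (Finset.card_image_of_injOn hinj).symm
          _ ≤ M := himg
    exact Nat.le_of_mul_le_mul_right key (by omega)
  -- F contains A and B disjointly
  have hABF : A.card + B.card ≤ F.card := by
    have hdisj : Disjoint A B := by
      rw [Finset.disjoint_left]
      intro P hPA hPB
      have h1 := (Finset.mem_filter.1 hPA).2
      have h2 := (Finset.mem_filter.1 hPB).2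
      omega
    calc A.card + B.card = (A ∪ B).card := (Finset.card_union_of_disjoint hdisj).symm
      _ ≤ F.card := Finset.card_le_card (Finset.union_subset
          (Finset.filter_subset _ _) (Finset.filter_subset _ _))
  have h2A : 2 * A.card ≤ F.card := by omega
  -- F is nonempty
  have hFpos : 0 < F.card := by
    apply Finset.card_pos.2
    exact ⟨(∅, true), by rw [hmemF]; intro i hi; simp at hi⟩
  -- every clique in F has size ≤ M
  have hle : ∀ P ∈ F, P.1.card ≤ M := by
    intro P hP
    exact hMub P.1 P.2 ((hmemF P).1 hP)
  -- sum bound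
  have hcompl : (F.filter (fun P => ¬ P.1.card = M)).card + A.card = F.card := by
    rw [hAdef, add_comm]
    exact Finset.card_filter_add_card_filter_not _
  have hsum : (F.card : ℝ) / 2 ≤ ∑ P ∈ F, ((M : ℝ) - P.1.card) := by
    have hsplit := Finset.sum_filter_add_sum_filter_not F (fun P => P.1.card = M)
      (fun P => ((M : ℝ) - P.1.card))
    have h1 : ∑ P ∈ F.filter (fun P => P.1.card = M), ((M : ℝ) - P.1.card) = 0 := by
      apply Finset.sum_eq_zero
      intro P hP
      have h := (Finset.mem_filter.1 hP).2
      rw [h]; ring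
    have h2 : ((F.filter (fun P => ¬ P.1.card = M)).card : ℝ) ≤
        ∑ P ∈ F.filter (fun P => ¬ P.1.card = M), ((M : ℝ) - P.1.card) := by
      calc ((F.filter (fun P => ¬ P.1.card = M)).card : ℝ)
          = ∑ P ∈ F.filter (fun P => ¬ P.1.card = M), (1 : ℝ) := by simp
        _ ≤ _ := by
            apply Finset.sum_le_sum
            intro P hP
            obtain ⟨hPF, hPne⟩ := Finset.mem_filter.1 hP
            have h3 := hle P hPF
            have h4 : P.1.card + 1 ≤ M := by omega
            have h5 : (P.1.card : ℝ) + 1 ≤ M := by exact_mod_cast h4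
            linarith
    have h7 : (F.card : ℝ) ≤ 2 * ((F.filter (fun P => ¬ P.1.card = M)).card : ℝ) := by
      have hnat : F.card ≤ 2 * (F.filter (fun P => ¬ P.1.card = M)).card := by omega
      exact_mod_cast hnat
    rw [← hsplit, h1, zero_add]
    linarith
  -- finish
  have hexp : ∑ P ∈ F, ((M : ℝ) - P.1.card) =
      (F.card : ℝ) * M - ∑ P ∈ F, (P.1.card : ℝ) := by
    rw [Finset.sum_sub_distrib, Finset.sum_const, nsmul_eq_mul]
  have hFc : (0 : ℝ) < F.card := by exact_mod_cast hFpos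
  have hdiv : (∑ P ∈ F, (P.1.card : ℝ)) / (F.card : ℝ) ≤ (M : ℝ) - 1/2 := by
    rw [div_le_iff₀ hFc]
    have : (F.card : ℝ) / 2 ≤ (F.card : ℝ) * M - ∑ P ∈ F, (P.1.card : ℝ) := hexp ▸ hsum
    linarith
  linarith
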